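/- For every natural number N with N > 623 there exists a prime p not dividing N such that ψ(N) > (12/(p−1))·(6·(p+1)^2 − 2^{ω(N)}), where ψ is the Dedekind psi function and ω(N) the number of distinct prime divisors of N. -/
import Mathlib

open Finset

lemma primesBelow_prod_bound : ∀ p : ℕ, p.Prime → 13 ≤ p →
    72 * (p+1)^2 ≤ (p-1) * ∏ q ∈ p.primesBelow, (q+1) := by
  intro p
  induction p using Nat.strong_induction_on with
  | _ p ih =>
    intro hp h13
    by_cases h31 : p < 31
    · interval_cases p <;> first | (exact absurd hp (by decide)) | decide
    · push_neg at h31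
      obtain ⟨p', hp', hgt, hle⟩ := Nat.exists_prime_lt_and_le_two_mul (p/2) (by omega)
      have hodd : p % 2 = 1 := Nat.odd_iff.mp (hp.odd_of_ne_two (by omega))
      have hlt : p' < p := by omega
      have h13' : 13 ≤ p' := by omega
      have IH := ih p' hlt hp' h13'
      set P' := ∏ q ∈ p'.primesBelow, (q+1) with hP'def
      have hnotmem : p' ∉ p'.primesBelow := fun h => by
        have := Nat.lt_of_mem_primesBelow h; omega
      have hsub : insert p' p'.primesBelow ⊆ p.primesBelow := by
        intro q hq
        rcases Finset.mem_insert.mp hq with rfl | hq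
        · exact Nat.mem_primesBelow.mpr ⟨hlt, hp'⟩
        · have h1 := Nat.lt_of_mem_primesBelow hq
          have h2 := Nat.prime_of_mem_primesBelow hq
          exact Nat.mem_primesBelow.mpr ⟨by omega, h2⟩
      have hP : (p'+1) * P' ≤ ∏ q ∈ p.primesBelow, (q+1) := by
        calc (p'+1) * P' = ∏ q ∈ insert p' p'.primesBelow, (q+1) :=
              (Finset.prod_insert hnotmem).symm
          _ ≤ _ := Finset.prod_le_prod_of_subset_of_one_le' hsub
              (fun i _ _ => Nat.le_add_left 1 i)
      have hP'pos : 72*(p'+1) ≤ P' := by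
        have h1 : (p'-1) * (72*(p'+1)) ≤ (p'-1) * P' := by
          refine le_trans ?_ IH
          have : (p'-1) ≤ (p'+1) := by omega
          calc (p'-1) * (72*(p'+1)) = 72*(p'+1)*(p'-1) := by ring
            _ ≤ 72*(p'+1)*(p'+1) := Nat.mul_le_mul_left _ this
            _ = 72*(p'+1)^2 := by ring
        exact Nat.le_of_mul_le_mul_left h1 (by omega)
      obtain ⟨c, rfl⟩ : ∃ c, p = c + 1 := ⟨p - 1, by omega⟩
      obtain ⟨c', rfl⟩ : ∃ c', p' = c' + 1 := ⟨p' - 1, by omega⟩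
      simp only [Nat.add_sub_cancel] at *
      have hc : c + 2 ≤ 2*(c'+1) := by omega
      have hc3 : 16 ≤ c := by omega
      calc 72 * (c+1+1)^2 ≤ 72 * (4*(c'+2)^2) := by nlinarith
        _ = 288 * (c'+2)^2 := by ring
        _ ≤ c * (72*(c'+2)) * (c'+2) := by nlinarith
        _ ≤ c * P' * (c'+2) := by
            exact Nat.mul_le_mul_right _ (Nat.mul_le_mul_left _ hP'pos)
        _ = c * ((c'+1+1) * P') := by ring
        _ ≤ c * ∏ q ∈ (c+1).primesBelow, (q+1) := Nat.mul_le_mul_left _ hP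

/-- The Dedekind psi function `ψ(N) = N · ∏_{q prime, q ∣ N} (1 + 1/q)`. -/
noncomputable def dedekindPsi (N : ℕ) : ℚ :=
  (N : ℚ) * ∏ q ∈ N.primeFactors, (1 + 1 / (q : ℚ))

lemma psi_ge (N : ℕ) (hN : N ≠ 0) (S : Finset ℕ) (hS : S ⊆ N.primeFactors) :
    (N : ℚ) * ∏ q ∈ S, (1 + 1 / (q : ℚ)) ≤ dedekindPsi N := by
  unfold dedekindPsi
  have hpos : ∀ q ∈ N.primeFactors, (0:ℚ) ≤ 1 + 1 / (q : ℚ) := by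
    intro q hq
    have := (Nat.prime_of_mem_primeFactors hq).pos
    positivity
  have h1 : ∏ q ∈ S, (1 + 1 / (q : ℚ)) ≤ ∏ q ∈ N.primeFactors, (1 + 1 / (q : ℚ)) := by
    rw [← Finset.prod_sdiff hS]
    have h2 : (1:ℚ) ≤ ∏ q ∈ N.primeFactors \ S, (1 + 1 / (q : ℚ)) := by
      have := Finset.prod_le_prod (s := N.primeFactors \ S)
        (f := fun _ : ℕ => (1:ℚ)) (g := fun q => 1 + 1 / (q : ℚ))
        (fun i _ => zero_le_one)
        (fun i hi => by
          have := (Nat.prime_of_mem_primeFactors (Finset.mem_sdiff.mp hi).1).pos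
          have h0 : (0:ℚ) < (i:ℚ) := by exact_mod_cast this
          nlinarith [one_div_pos.mpr h0])
      simpa using this
    have hSnonneg : (0:ℚ) ≤ ∏ q ∈ S, (1 + 1 / (q : ℚ)) := by
      refine Finset.prod_nonneg fun q hq => hpos q (hS hq)
    nlinarith [mul_le_mul_of_nonneg_right h2 hSnonneg]
  refine mul_le_mul_of_nonneg_left h1 (by positivity)

/-- For every `N > 623` there is a prime `p ∤ N` with
`ψ(N) > (12/(p-1)) · (6(p+1)² − 2^{ω(N)})`, where `ω(N)` is the number of distinct
prime divisors of `N`. -/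
theorem exists_prime_psi_bound (N : ℕ) (hN : 623 < N) :
    ∃ p : ℕ, p.Prime ∧ ¬ p ∣ N ∧
      (12 / ((p : ℚ) - 1)) * (6 * ((p : ℚ) + 1) ^ 2 - 2 ^ N.primeFactors.card)
        < dedekindPsi N := by
  have hN0 : N ≠ 0 := by omega
  have hNQ : (624:ℚ) ≤ (N:ℚ) := by exact_mod_cast hN
  have hex : ∃ p, p.Prime ∧ ¬ p ∣ N := by
    obtain ⟨r, hrN, hr⟩ := Nat.exists_infinite_primes (N+1)
    exact ⟨r, hr, fun hd => by have := Nat.le_of_dvd (by omega) hd; omega⟩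
  classical
  obtain ⟨hp, hpN⟩ := Nat.find_spec hex
  set p := Nat.find hex with hpdef
  refine ⟨p, hp, hpN, ?_⟩
  have hmin : ∀ q, q < p → q.Prime → q ∣ N := by
    intro q hq hqp
    by_contra h
    exact Nat.find_min hex hq ⟨hqp, h⟩
  have hsub : p.primesBelow ⊆ N.primeFactors := by
    intro q hq
    exact Nat.mem_primeFactors.mpr ⟨Nat.prime_of_mem_primesBelow hq,
      hmin q (Nat.lt_of_mem_primesBelow hq) (Nat.prime_of_mem_primesBelow hq), hN0⟩
  have hpsi := psi_ge N hN0 p.primesBelow hsub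
  have hω : 1 ≤ N.primeFactors.card := by
    have hm : N.minFac ∈ N.primeFactors :=
      Nat.mem_primeFactors.mpr ⟨Nat.minFac_prime (by omega), Nat.minFac_dvd N, hN0⟩
    exact Finset.card_pos.mpr ⟨_, hm⟩
  have h2ω : (2:ℚ) ≤ 2 ^ N.primeFactors.card := by
    calc (2:ℚ) = 2^1 := (pow_one 2).symm
      _ ≤ 2 ^ N.primeFactors.card := by
          exact pow_le_pow_right₀ (by norm_num) hω
  have h2ωpos : (0:ℚ) < 2 ^ N.primeFactors.card := by positivity
  have hp2 : 2 ≤ p := hp.two_le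
  rcases lt_or_ge p 13 with h13 | h13
  · -- small primes
    have hψ1 : (N:ℚ) + 1 ≤ dedekindPsi N := by
      have hm : N.minFac ∈ N.primeFactors :=
        Nat.mem_primeFactors.mpr ⟨Nat.minFac_prime (by omega), Nat.minFac_dvd N, hN0⟩
      have h := psi_ge N hN0 {N.minFac} (Finset.singleton_subset_iff.mpr hm)
      rw [Finset.prod_singleton] at h
      have hmpos : (0:ℚ) < (N.minFac : ℚ) := by
        exact_mod_cast (Nat.minFac_prime (by omega : N ≠ 1)).pos
      have hmle : (N.minFac : ℚ) ≤ (N:ℚ) := by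
        exact_mod_cast Nat.le_of_dvd (by omega) (Nat.minFac_dvd N)
      have : (N:ℚ) + 1 ≤ (N:ℚ) * (1 + 1/(N.minFac:ℚ)) := by
        rw [mul_add, mul_one, mul_one_div]
        have : (1:ℚ) ≤ (N:ℚ) / (N.minFac:ℚ) := (one_le_div hmpos).mpr hmle
        linarith
      linarith
    interval_cases p
    · -- p = 2
      norm_num
      nlinarith [hψ1, h2ω, hNQ]
    · -- p = 3
      have hS : Nat.primesBelow 3 = {2} := by decide
      rw [hS, Finset.prod_singleton] at hpsi
      norm_num at hpsi ⊢
      nlinarith [hpsi, h2ωpos, hNQ]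
    · exact absurd hp (by decide)
    · -- p = 5
      have hS : Nat.primesBelow 5 = {2, 3} := by decide
      rw [hS] at hpsi
      norm_num [Finset.prod_insert, Finset.prod_singleton] at hpsi
      norm_num
      nlinarith [hpsi, h2ωpos, hNQ]
    · exact absurd hp (by decide)
    · -- p = 7
      have hS : Nat.primesBelow 7 = {2, 3, 5} := by decide
      rw [hS] at hpsi
      norm_num [Finset.prod_insert, Finset.prod_singleton] at hpsi
      norm_num
      nlinarith [hpsi, h2ωpos, hNQ]
    · exact absurd hp (by decide)
    · exact absurd hp (by decide)
    · exact absurd hp (by decide)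
    · -- p = 11
      have hS : Nat.primesBelow 11 = {2, 3, 5, 7} := by decide
      rw [hS] at hpsi
      norm_num [Finset.prod_insert, Finset.prod_singleton] at hpsi
      norm_num
      nlinarith [hpsi, h2ωpos, hNQ]
    · exact absurd hp (by decide)
  · -- p ≥ 13
    have hB := primesBelow_prod_bound p hp h13
    have hdvd : (∏ q ∈ p.primesBelow, q) ∣ N :=
      (Finset.prod_dvd_prod_of_subset _ _ _ hsub).trans (Nat.prod_primeFactors_dvd N)
    have hNge : (∏ q ∈ p.primesBelow, q) ≤ N := Nat.le_of_dvd (by omega) hdvd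
    have hPi2nonneg : (0:ℚ) ≤ ∏ q ∈ p.primesBelow, (1 + 1/(q:ℚ)) := by
      refine Finset.prod_nonneg fun q hq => ?_
      have := (Nat.prime_of_mem_primesBelow hq).pos
      positivity
    have hfact : (∏ q ∈ p.primesBelow, ((q:ℚ)+1)) =
        (∏ q ∈ p.primesBelow, (q:ℚ)) * ∏ q ∈ p.primesBelow, (1 + 1/(q:ℚ)) := by
      rw [← Finset.prod_mul_distrib]
      refine Finset.prod_congr rfl fun q hq => ?_
      have hq0 : (q:ℚ) ≠ 0 := by
        exact_mod_cast (Nat.prime_of_mem_primesBelow hq).pos.ne'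
      field_simp
    have hPle : (∏ q ∈ p.primesBelow, ((q:ℚ)+1)) ≤ dedekindPsi N := by
      rw [hfact]
      refine le_trans (mul_le_mul_of_nonneg_right ?_ hPi2nonneg) hpsi
      calc (∏ q ∈ p.primesBelow, (q:ℚ)) = ((∏ q ∈ p.primesBelow, q : ℕ) : ℚ) := by push_cast; rfl
        _ ≤ (N:ℚ) := by exact_mod_cast hNge
    have hcast : 72*((p:ℚ)+1)^2 ≤ ((p:ℚ)-1) * ∏ q ∈ p.primesBelow, ((q:ℚ)+1) := by
      have h := Nat.cast_le (α := ℚ).mpr hB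
      push_cast [Nat.cast_sub (by omega : 1 ≤ p)] at h
      convert h using 2
    have hp1 : (0:ℚ) < (p:ℚ) - 1 := by
      have : (2:ℚ) ≤ (p:ℚ) := by exact_mod_cast hp2
      linarith
    have h1 : (12/((p:ℚ)-1)) * (6*((p:ℚ)+1)^2 - 2 ^ N.primeFactors.card)
        < (12/((p:ℚ)-1)) * (6*((p:ℚ)+1)^2) := by
      apply mul_lt_mul_of_pos_left (by linarith) (by positivity)
    have h2 : (12/((p:ℚ)-1)) * (6*((p:ℚ)+1)^2) ≤ ∏ q ∈ p.primesBelow, ((q:ℚ)+1) := by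
      rw [div_mul_eq_mul_div, div_le_iff₀ hp1]
      nlinarith [hcast]
    linarith
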